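/- Let A : ℝ → Matrix (Fin n) (Fin n) ℂ be a family of complex n × n matrices each of whose entries is real-analytic at 0, and let λ₀ be a simple eigenvalue of A(0) (a root of multiplicity one of its characteristic polynomial). Then there exist δ > 0 and a real-analytic function λ : ℝ → ℂ on (−δ, δ) with λ(0) = λ₀ such that for every ε with |ε| < δ, λ(ε) is a simple eigenvalue of A(ε). -/

import Mathlib

open Polynomial

lemma rm_eq_one_iff {p : ℂ[X]} (hp : p ≠ 0) (t : ℂ) :
    p.rootMultiplicity t = 1 ↔ p.eval t = 0 ∧ p.derivative.eval t ≠ 0 := by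
  constructor
  · intro h
    refine ⟨(rootMultiplicity_pos hp).mp (by omega), fun hd => ?_⟩
    have := (one_lt_rootMultiplicity_iff_isRoot hp).mpr
      ⟨(rootMultiplicity_pos hp).mp (by omega), hd⟩
    omega
  · rintro ⟨h0, hd⟩
    have h1 : 0 < p.rootMultiplicity t := (rootMultiplicity_pos hp).mpr h0
    have h2 : ¬ 1 < p.rootMultiplicity t := fun hlt =>
      hd ((one_lt_rootMultiplicity_iff_isRoot hp).mp hlt).2
    omega

/-- Theorem 1, first part: a simple eigenvalue of an analytically perturbed matrix
continues as a real-analytic eigenvalue branch consisting of simple eigenvalues. -/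
theorem simple_eigenvalue_analytic_continuation
    (n : ℕ) (A : ℝ → Matrix (Fin n) (Fin n) ℂ)
    (hA : ∀ i j, AnalyticAt ℝ (fun ε => A ε i j) 0)
    (lam₀ : ℂ) (hsimple : ((A 0).charpoly).rootMultiplicity lam₀ = 1) :
    ∃ δ > (0 : ℝ), ∃ lam : ℝ → ℂ,
      AnalyticOnNhd ℝ lam (Set.Ioo (-δ) δ) ∧ lam 0 = lam₀ ∧
      ∀ ε : ℝ, |ε| < δ → ((A ε).charpoly).rootMultiplicity (lam ε) = 1 := by
  set F : ℝ × ℂ → ℂ := fun p => ((A p.1).charpoly).eval p.2 with hFdef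
  -- analyticity of F on an open product set S
  obtain ⟨r, hr, hFS⟩ : ∃ r > (0:ℝ), AnalyticOnNhd ℝ F
      (Metric.ball (0:ℝ) r ×ˢ (Set.univ : Set ℂ)) := by
    have hev : ∀ᶠ x in nhds (0:ℝ), ∀ i j, AnalyticAt ℝ (fun ε => A ε i j) x := by
      rw [Filter.eventually_all]
      intro i
      rw [Filter.eventually_all]
      intro j
      exact (hA i j).eventually_analyticAt
    obtain ⟨r, hr, hAr⟩ := Metric.eventually_nhds_iff.mp hev
    refine ⟨r, hr, ?_⟩
    intro q hq
    have hq1 : q.1 ∈ Metric.ball (0:ℝ) r := hq.1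
    have hent : ∀ i j, AnalyticAt ℝ (fun p : ℝ × ℂ => A p.1 i j) q :=
      fun i j => (hAr (by simpa using hq1) i j).comp analyticAt_fst
    have hdet : F = fun p : ℝ × ℂ =>
        ∑ σ : Equiv.Perm (Fin n), (Equiv.Perm.sign σ : ℂ) *
          ∏ i, ((Matrix.diagonal fun _ : Fin n => p.2) - A p.1) (σ i) i := by
      funext p
      show ((A p.1).charpoly).eval p.2 = _
      rw [show ((A p.1).charpoly).eval p.2
          = ((Matrix.diagonal fun _ : Fin n => p.2) - A p.1).det by
        rw [Matrix.charpoly, ← Polynomial.coe_evalRingHom, RingHom.map_det]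
        congr 1
        ext i j
        simp [Matrix.charmatrix_apply, Matrix.diagonal_apply, apply_ite (Polynomial.eval p.2)],
        Matrix.det_apply']
    rw [hdet]
    apply Finset.analyticAt_fun_sum
    intro σ _
    apply AnalyticAt.mul analyticAt_const
    apply Finset.analyticAt_fun_prod
    intro i _
    have : (fun p : ℝ × ℂ => ((Matrix.diagonal fun _ : Fin n => p.2) - A p.1) (σ i) i)
        = fun p : ℝ × ℂ => (if σ i = i then p.2 else 0) - A p.1 (σ i) i := by
      funext p
      simp [Matrix.sub_apply, Matrix.diagonal_apply]
    rw [this]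
    apply AnalyticAt.sub _ (hent _ _)
    by_cases h : σ i = i <;> simp [h]
    exacts [analyticAt_snd, analyticAt_const]
  set S : Set (ℝ × ℂ) := Metric.ball (0:ℝ) r ×ˢ (Set.univ : Set ℂ) with hSdef
  have hSopen : IsOpen S := Metric.isOpen_ball.prod isOpen_univ
  -- derivative identity in the second variable
  have key : ∀ q ∈ S, fderiv ℝ F q (0, 1) = ((A q.1).charpoly).derivative.eval q.2 := by
    intro q hq
    have hFd : HasFDerivAt F (fderiv ℝ F q) q := (hFS q hq).differentiableAt.hasFDerivAt
    have hinr : HasFDerivAt (fun w : ℂ => (q.1, w)) (ContinuousLinearMap.inr ℝ ℝ ℂ) q.2 :=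
      hasFDerivAt_prodMk_right q.1 q.2
    have hd1 : HasFDerivAt (fun w : ℂ => F (q.1, w))
        ((fderiv ℝ F q).comp (ContinuousLinearMap.inr ℝ ℝ ℂ)) q.2 := (hFd.comp q.2 hinr : )
    have hd2 : HasFDerivAt (fun w : ℂ => F (q.1, w))
        ((ContinuousLinearMap.smulRight (1 : ℂ →L[ℂ] ℂ)
          (((A q.1).charpoly).derivative.eval q.2)).restrictScalars ℝ) q.2 :=
      ((Polynomial.hasDerivAt ((A q.1).charpoly) q.2).hasFDerivAt).restrictScalars ℝ
    have h1 := congrArg (fun (L : ℂ →L[ℝ] ℂ) => L 1) (hd1.unique hd2)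
    simpa using h1
  -- the base point
  set q₀ : ℝ × ℂ := (0, lam₀) with hq₀def
  have hq₀S : q₀ ∈ S := ⟨Metric.mem_ball_self hr, Set.mem_univ _⟩
  have hcp0 : (A 0).charpoly ≠ 0 := ((A 0).charpoly_monic).ne_zero
  obtain ⟨heval0, hder0⟩ := (rm_eq_one_iff hcp0 lam₀).mp hsimple
  have hF0 : F q₀ = 0 := heval0
  -- G and its derivative
  set G : ℝ × ℂ → ℝ × ℂ := fun p => (p.1, F p) with hGdef
  have hGS : AnalyticOnNhd ℝ G S := fun q hq => analyticAt_fst.prod (hFS q hq)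
  set DF : ℝ × ℂ →L[ℝ] ℂ := fderiv ℝ F q₀ with hDFdef
  set DG : ℝ × ℂ →L[ℝ] ℝ × ℂ := (ContinuousLinearMap.fst ℝ ℝ ℂ).prod DF with hDGdef
  have hGd : HasFDerivAt G DG q₀ :=
    HasFDerivAt.prodMk (hasFDerivAt_fst) ((hFS q₀ hq₀S).differentiableAt.hasFDerivAt)
  -- DF on the second factor is multiplication by c ≠ 0
  have hDFsnd : ∀ w : ℂ, DF (0, w) = (((A 0).charpoly).derivative.eval lam₀) * w := by
    intro w
    have hFd : HasFDerivAt F DF q₀ := (hFS q₀ hq₀S).differentiableAt.hasFDerivAt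
    have hinr : HasFDerivAt (fun z : ℂ => (q₀.1, z)) (ContinuousLinearMap.inr ℝ ℝ ℂ) q₀.2 :=
      hasFDerivAt_prodMk_right q₀.1 q₀.2
    have hd1 : HasFDerivAt (fun z : ℂ => F (q₀.1, z))
        (DF.comp (ContinuousLinearMap.inr ℝ ℝ ℂ)) q₀.2 := (hFd.comp q₀.2 hinr : )
    have hd2 : HasFDerivAt (fun z : ℂ => F (q₀.1, z))
        ((ContinuousLinearMap.smulRight (1 : ℂ →L[ℂ] ℂ)
          (((A q₀.1).charpoly).derivative.eval q₀.2)).restrictScalars ℝ) q₀.2 :=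
      ((Polynomial.hasDerivAt ((A q₀.1).charpoly) q₀.2).hasFDerivAt).restrictScalars ℝ
    have h1 := congrArg (fun (L : ℂ →L[ℝ] ℂ) => L w) (hd1.unique hd2)
    simpa [mul_comm] using h1
  have hDGapp : ∀ v : ℝ × ℂ, DG v = (v.1, DF v) := fun v => rfl
  have hDGinj : Function.Injective DG := by
    intro v v' hvv'
    rw [hDGapp, hDGapp, Prod.mk.injEq] at hvv'
    obtain ⟨h1, h2⟩ := hvv'
    have h3 : DF (v - v') = 0 := by rw [map_sub, h2, sub_self]
    have hv : v - v' = ((0:ℝ), v.2 - v'.2) := by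
      rw [Prod.mk.injEq]
      exact ⟨sub_eq_zero.mpr h1, rfl⟩
    rw [hv, hDFsnd] at h3
    have h4 : v.2 - v'.2 = 0 := by
      rcases mul_eq_zero.mp h3 with h | h
      · exact absurd h hder0
      · exact h
    have hv2 : v.2 = v'.2 := sub_eq_zero.mp h4
    exact Prod.ext h1 hv2
  have hDGbij : Function.Bijective DG :=
    ⟨hDGinj, (LinearMap.injective_iff_surjective (f := DG.toLinearMap)).mp hDGinj⟩
  let eL : (ℝ × ℂ) ≃L[ℝ] (ℝ × ℂ) :=
    (LinearEquiv.ofBijective DG.toLinearMap hDGbij).toContinuousLinearEquiv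
  have heL : (eL : (ℝ × ℂ) →L[ℝ] (ℝ × ℂ)) = DG := by
    ext v <;> rfl
  have hfderivG : fderiv ℝ G q₀ = DG := hGd.fderiv
  have hstrict : HasStrictFDerivAt G (eL : (ℝ × ℂ) →L[ℝ] (ℝ × ℂ)) q₀ := by
    have := (hGS q₀ hq₀S).hasStrictFDerivAt
    rwa [hfderivG, ← heL] at this
  set f := HasStrictFDerivAt.toOpenPartialHomeomorph G hstrict with hfdef
  have hfcoe : (f : ℝ × ℂ → ℝ × ℂ) = G := HasStrictFDerivAt.toOpenPartialHomeomorph_coe hstrict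
  have hq₀src : q₀ ∈ f.source := HasStrictFDerivAt.mem_toOpenPartialHomeomorph_source hstrict
  have hGq₀ : G q₀ = ((0:ℝ), (0:ℂ)) := by
    simp [hGdef, hF0, hq₀def]
    exact hF0
  -- the inverse is analytic at (0,0)
  have hsymm : AnalyticAt ℝ (f.symm) ((0:ℝ), (0:ℂ)) := by
    obtain ⟨p, hp⟩ := hGS q₀ hq₀S
    have hpf : HasFPowerSeriesAt f p q₀ := by rwa [hfcoe]
    have hp1 : p 1 = (continuousMultilinearCurryFin1 ℝ (ℝ × ℂ) (ℝ × ℂ)).symm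
        (eL : (ℝ × ℂ) →L[ℝ] (ℝ × ℂ)) := by
      have := hp.fderiv_eq
      rw [hfderivG] at this
      rw [heL, this]
      simp
    have := f.hasFPowerSeriesAt_symm hq₀src hpf hp1
    have hfq₀ : f q₀ = ((0:ℝ), (0:ℂ)) := by rw [hfcoe, hGq₀]
    rw [hfq₀] at this
    exact ⟨_, this⟩
  have hfq₀' : f q₀ = ((0:ℝ), (0:ℂ)) := by rw [hfcoe, hGq₀]
  have hgq₀ : f.symm ((0:ℝ), (0:ℂ)) = q₀ := by
    rw [← hfq₀']
    exact f.left_inv hq₀src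
  -- the set where the z-derivative does not vanish
  have hcont : ContinuousAt ((fun L : (ℝ × ℂ) →L[ℝ] ℂ => L ((0:ℝ), (1:ℂ))) ∘
      (fun q : ℝ × ℂ => fderiv ℝ F q)) q₀ := by
    have h1 : ContinuousAt (fun q : ℝ × ℂ => fderiv ℝ F q) q₀ :=
      ((hFS.fderiv q₀ hq₀S).continuousAt)
    exact ContinuousAt.comp
      ((ContinuousLinearMap.apply ℝ ℂ (((0:ℝ), (1:ℂ)) : ℝ × ℂ)).continuous.continuousAt) h1
  have hWnhds : (S ∩ {q : ℝ × ℂ | fderiv ℝ F q ((0:ℝ), (1:ℂ)) ≠ 0}) ∈ nhds q₀ := by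
    refine Filter.inter_mem (hSopen.mem_nhds hq₀S) ?_
    have hne : fderiv ℝ F q₀ ((0:ℝ), (1:ℂ)) ≠ 0 := by
      rw [key q₀ hq₀S]
      exact hder0
    exact hcont.preimage_mem_nhds (isOpen_compl_singleton.mem_nhds hne)
  -- the inclusion map
  have hιcont : Continuous (fun t : ℝ => ((t, (0:ℂ)) : ℝ × ℂ)) :=
    continuous_id.prodMk continuous_const
  have E1 : ∀ᶠ ε in nhds (0:ℝ), AnalyticAt ℝ (f.symm) ((ε, (0:ℂ)) : ℝ × ℂ) :=
    hιcont.continuousAt.eventually hsymm.eventually_analyticAt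
  have E2 : ∀ᶠ ε in nhds (0:ℝ), ((ε, (0:ℂ)) : ℝ × ℂ) ∈ f.target := by
    have htgt : f.target ∈ nhds (((0:ℝ), (0:ℂ)) : ℝ × ℂ) := by
      apply f.open_target.mem_nhds
      rw [← hfq₀']
      exact f.map_source hq₀src
    exact hιcont.continuousAt.preimage_mem_nhds htgt
  have E3 : ∀ᶠ ε in nhds (0:ℝ),
      f.symm ((ε, (0:ℂ)) : ℝ × ℂ) ∈ (S ∩ {q : ℝ × ℂ | fderiv ℝ F q ((0:ℝ), (1:ℂ)) ≠ 0}) := by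
    have hgc : ContinuousAt ((f.symm : ℝ × ℂ → ℝ × ℂ) ∘ (fun t : ℝ => ((t, (0:ℂ)) : ℝ × ℂ))) 0 :=
      ContinuousAt.comp (by exact hsymm.continuousAt) hιcont.continuousAt
    have := hgc.preimage_mem_nhds (show (S ∩ {q : ℝ × ℂ | fderiv ℝ F q ((0:ℝ), (1:ℂ)) ≠ 0})
        ∈ nhds (((f.symm : ℝ × ℂ → ℝ × ℂ) ∘ (fun t : ℝ => ((t, (0:ℂ)) : ℝ × ℂ))) 0) from by
      show _ ∈ nhds (f.symm (((0:ℝ), (0:ℂ)) : ℝ × ℂ))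
      rwa [hgq₀])
    exact this
  obtain ⟨δ, hδ, hδall⟩ := Metric.eventually_nhds_iff.mp ((E1.and E2).and E3)
  refine ⟨δ, hδ, fun ε => (f.symm ((ε, (0:ℂ)) : ℝ × ℂ)).2, ?_, ?_, ?_⟩
  · intro ε hε
    have habs : dist ε 0 < δ := by
      rw [Real.dist_eq, sub_zero]
      exact abs_lt.mpr ⟨hε.1, hε.2⟩
    have h := hδall habs
    have hι : AnalyticAt ℝ (fun t : ℝ => ((t, (0:ℂ)) : ℝ × ℂ)) ε :=
      (analyticAt_id).prod analyticAt_const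
    have h2 : AnalyticAt ℝ ((fun q : ℝ × ℂ => q.2) ∘
        ((f.symm : ℝ × ℂ → ℝ × ℂ) ∘ (fun t : ℝ => ((t, (0:ℂ)) : ℝ × ℂ)))) ε :=
      analyticAt_snd.comp (AnalyticAt.comp (by exact h.1.1) hι)
    exact h2
  · show (f.symm (((0:ℝ), (0:ℂ)) : ℝ × ℂ)).2 = lam₀
    rw [hgq₀]
  · intro ε hε
    have habs : dist ε 0 < δ := by
      rw [Real.dist_eq, sub_zero]
      exact hε
    obtain ⟨⟨han, htgt⟩, hmem⟩ := hδall habs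
    set q : ℝ × ℂ := f.symm ((ε, (0:ℂ)) : ℝ × ℂ) with hqdef
    have hri : G q = ((ε, (0:ℂ)) : ℝ × ℂ) := by
      rw [← hfcoe]
      exact f.right_inv htgt
    have hq1 : q.1 = ε := congrArg Prod.fst hri
    have hFq : F q = 0 := congrArg Prod.snd hri
    have hqeq : q = ((ε, q.2) : ℝ × ℂ) := by
      rw [← hq1]
    have hcpε : (A ε).charpoly ≠ 0 := ((A ε).charpoly_monic).ne_zero
    rw [rm_eq_one_iff hcpε]
    constructor
    · have : F q = ((A ε).charpoly).eval q.2 := by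
        rw [hFdef]
        simp [hq1]
      rw [← this, hFq]
    · have hkey := key q hmem.1
      rw [hq1] at hkey
      rw [← hkey]
      exact hmem.2
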